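/- Let Λ > 0, M > 0, Q ≠ 0 and s > 0. If a is a real number with a < 0 and P'(a,s) = 0, then P''(a,s) > 0. Consequently, every local maximum of the function r ↦ P(r,s) is attained at some positive value of r. -/

import Mathlib

noncomputable section

/-- The quartic polynomial `P(r,s) = sL/3*r^4 - r^2 + 2sM*r - sQ^2` (case `Q != 0`). -/
def P (M Q Λ s r : ℝ) : ℝ := s * Λ / 3 * r ^ 4 - r ^ 2 + 2 * s * M * r - s * Q ^ 2

/-- First derivative of `P` with respect to `r`. -/
def P' (M Q Λ s r : ℝ) : ℝ := 4 * s * Λ / 3 * r ^ 3 - 2 * r + 2 * s * M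

/-- Second derivative of `P` with respect to `r`. -/
def P'' (M Q Λ s r : ℝ) : ℝ := 4 * s * Λ * r ^ 2 - 2

lemma hasDerivP (M Q Λ s a : ℝ) :
    HasDerivAt (fun r => P M Q Λ s r) (P' M Q Λ s a) a := by
  have h := ((((hasDerivAt_pow 4 a).const_mul (s * Λ / 3)).sub
      (hasDerivAt_pow 2 a)).add ((hasDerivAt_id a).const_mul (2 * s * M))).sub_const (s * Q ^ 2)
  simp only [id_eq] at h
  refine h.congr_deriv ?_
  unfold P'; push_cast; ring

/-- For Λ > 0, M > 0, Q ≠ 0, s > 0: any negative critical point of `P(·,s)` has positive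
second derivative, so every local maximum of `r ↦ P(r,s)` is attained at positive `r`. -/
theorem local_maxima_are_positive (M Q Λ s : ℝ)
    (hΛ : 0 < Λ) (hM : 0 < M) (hQ : Q ≠ 0) (hs : 0 < s) :
    (∀ a : ℝ, a < 0 → P' M Q Λ s a = 0 → 0 < P'' M Q Λ s a) ∧
    (∀ a : ℝ, IsLocalMax (fun r => P M Q Λ s r) a → 0 < a) := by
  have key : ∀ a : ℝ, a < 0 → P' M Q Λ s a = 0 → 0 < P'' M Q Λ s a := by
    intro a ha hcrit
    unfold P' at hcrit
    unfold P''
    have h1 : 0 < s * M := mul_pos hs hM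
    have h3 : (4 * s * Λ / 3 * a ^ 3 - 2 * a + 2 * s * M) * a = 0 := by rw [hcrit]; ring
    have ha2 : 0 < a ^ 2 := by nlinarith
    nlinarith [h3, ha2, mul_neg_of_pos_of_neg h1 ha]
  refine ⟨key, fun a hmax => ?_⟩
  by_contra hpos
  push_neg at hpos
  have hcrit : P' M Q Λ s a = 0 := hmax.hasDerivAt_eq_zero (hasDerivP M Q Λ s a)
  rcases lt_or_eq_of_le hpos with ha | ha
  · -- a < 0 : strict local min, contradiction
    have h2 := key a ha hcrit
    unfold P'' at h2
    -- g r := s*Λ/3*(r^2+2*a*r+3*a^2) - 1, g a = 2*s*Λ*a^2 - 1 > 0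
    set g : ℝ → ℝ := fun r => s * Λ / 3 * (r ^ 2 + 2 * a * r + 3 * a ^ 2) - 1 with hg
    have hga : 0 < g a := by simp only [hg]; nlinarith
    have hgc : ContinuousAt g a := by fun_prop
    have hev : ∀ᶠ x in nhds a, 0 < g x := hgc.eventually (eventually_gt_nhds hga)
    have hev2 : ∀ᶠ x in nhdsWithin a {a}ᶜ, (fun r => P M Q Λ s r) x ≤ P M Q Λ s a ∧ 0 < g x :=
      ((hmax.and hev).filter_mono nhdsWithin_le_nhds)
    have : ∀ᶠ x in nhdsWithin a {a}ᶜ, False := by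
      filter_upwards [hev2, self_mem_nhdsWithin] with x hx hx'
      have hne : x ≠ a := hx'
      have hfact : P M Q Λ s x - P M Q Λ s a = (x - a) ^ 2 * g x := by
        unfold P at *
        unfold P' at hcrit
        simp only [hg]
        nlinarith [hcrit]
      have hsq : 0 < (x - a) ^ 2 :=
        lt_of_le_of_ne (sq_nonneg _) (Ne.symm (pow_ne_zero 2 (sub_ne_zero.mpr hne)))
      nlinarith [hx.1, hx.2, mul_pos hsq hx.2]
    exact (this.exists).elim (fun x hx => hx)
  · -- a = 0 : P' = 2sM ≠ 0
    subst ha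
    unfold P' at hcrit
    simp at hcrit
    rcases hcrit with h | h
    exacts [hs.ne' h, hM.ne' h]
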